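/- For paths P_n and P_m with n,m ≥ 2, F(P_n +_S P_m) = 72nm − 74n − 82m + 72. -/

import Mathlib

open SimpleGraph Finset
open scoped Classical

noncomputable section

/-- The generalized hierarchical product `G(U)ΠH`. -/
def hierProd {α β : Type*} (G : SimpleGraph α) (H : SimpleGraph β) (U : Set α) :
    SimpleGraph (α × β) where
  Adj p q := (p.1 = q.1 ∧ p.1 ∈ U ∧ H.Adj p.2 q.2) ∨ (p.2 = q.2 ∧ G.Adj p.1 q.1)
  symm := by
    constructor
    rintro p q (⟨h1, h2, h3⟩ | ⟨h1, h2⟩)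
    · exact Or.inl ⟨h1.symm, h1 ▸ h2, h3.symm⟩
    · exact Or.inr ⟨h1.symm, h2.symm⟩
  loopless := by
    constructor
    rintro p (⟨_, _, h⟩ | ⟨_, h⟩)
    · exact H.loopless.irrefl _ h
    · exact G.loopless.irrefl _ h

/-- The F-index (forgotten topological index): sum of cubes of degrees. -/
def Findex {α : Type*} [Fintype α] (G : SimpleGraph α) : ℕ :=
  ∑ v, G.degree v ^ 3

/-- The first Zagreb index: sum of squares of degrees. -/
def M1 {α : Type*} [Fintype α] (G : SimpleGraph α) : ℕ :=
  ∑ v, G.degree v ^ 2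

/-- The general first Zagreb index with exponent `n`. -/
def xiIndex {α : Type*} [Fintype α] (G : SimpleGraph α) (n : ℕ) : ℕ :=
  ∑ v, G.degree v ^ n

/-- The redefined Zagreb index `ReZG(G) = Σ_{uv∈E} d(u)d(v)(d(u)+d(v))`. -/
def ReZG {α : Type*} [Fintype α] (G : SimpleGraph α) : ℕ :=
  ∑ e ∈ G.edgeFinset,
    Sym2.lift ⟨fun u v => G.degree u * G.degree v * (G.degree u + G.degree v),
      fun u v => by ring⟩ e

/-- The subdivision graph `S(G)`: each edge replaced by a path of length two. -/
def Sgraph {α : Type*} (G : SimpleGraph α) : SimpleGraph (α ⊕ ↥G.edgeSet) where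
  Adj x y :=
    match x, y with
    | Sum.inl u, Sum.inr e => u ∈ (e : Sym2 α)
    | Sum.inr e, Sum.inl u => u ∈ (e : Sym2 α)
    | _, _ => False
  symm := by constructor; rintro (u | e) (v | f) h <;> simp_all
  loopless := by constructor; rintro (u | e) h <;> simp_all

/-- The graph on `V(G) ⊕ E(G)` whose only edges are the original edges of `G`. -/
def Ograph {α : Type*} (G : SimpleGraph α) : SimpleGraph (α ⊕ ↥G.edgeSet) where
  Adj x y :=
    match x, y with
    | Sum.inl u, Sum.inl v => G.Adj u v
    | _, _ => False
  symm := by constructor; rintro (u | e) (v | f) h <;> simp_all <;> exact h.symm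
  loopless := by constructor; rintro (u | e) h <;> simp_all

/-- The graph on `V(G) ⊕ E(G)` whose edges join pairs of adjacent edges of `G`
(line-graph adjacency). -/
def Lgraph {α : Type*} (G : SimpleGraph α) : SimpleGraph (α ⊕ ↥G.edgeSet) where
  Adj x y :=
    match x, y with
    | Sum.inr e, Sum.inr f => e ≠ f ∧ ∃ u, u ∈ (e : Sym2 α) ∧ u ∈ (f : Sym2 α)
    | _, _ => False
  symm := by
    constructor
    rintro (u | e) (v | f) h <;> simp_all
    exact ⟨Ne.symm h.1, h.2.imp fun u hu => hu.symm⟩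
  loopless := by constructor; rintro (u | e) h <;> simp_all

/-- The triangle parallel graph `R(G)`. -/
def Rgraph {α : Type*} (G : SimpleGraph α) : SimpleGraph (α ⊕ ↥G.edgeSet) :=
  Sgraph G ⊔ Ograph G

/-- The line superposition graph `Q(G)`. -/
def Qgraph {α : Type*} (G : SimpleGraph α) : SimpleGraph (α ⊕ ↥G.edgeSet) :=
  Sgraph G ⊔ Lgraph G

/-- The total graph `T(G)`. -/
def Tgraph {α : Type*} (G : SimpleGraph α) : SimpleGraph (α ⊕ ↥G.edgeSet) :=
  Sgraph G ⊔ Ograph G ⊔ Lgraph G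

/-- The F-sum `G +_F H`, where `K` is one of `S(G), R(G), Q(G), T(G)`:
the generalized hierarchical product `K(V(G))ΠH`. -/
def FSum {α β : Type*} {G : SimpleGraph α} (K : SimpleGraph (α ⊕ ↥G.edgeSet))
    (H : SimpleGraph β) : SimpleGraph ((α ⊕ ↥G.edgeSet) × β) :=
  hierProd K H (Set.range Sum.inl)

end
open SimpleGraph Finset
open scoped Classical

lemma hierProd_degree {α β : Type*} [Fintype α] [Fintype β]
    (K : SimpleGraph α) (H : SimpleGraph β) (U : Set α) (x : α) (v : β) :
    (hierProd K H U).degree (x, v) =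
      (if x ∈ U then H.degree v else 0) + K.degree x := by
  classical
  by_cases hx : x ∈ U
  · have hnb : (hierProd K H U).neighborFinset (x, v) =
        ((H.neighborFinset v).image fun v' => (x, v')) ∪
          ((K.neighborFinset x).image fun x' => (x', v)) := by
      ext ⟨a, b⟩
      rw [mem_neighborFinset]
      simp only [mem_neighborFinset, hierProd, Finset.mem_union, Finset.mem_image,
        Prod.mk.injEq]
      constructor
      · rintro (⟨h1, _, h3⟩ | ⟨h1, h2⟩)
        · exact Or.inl ⟨b, h3, h1, rfl⟩
        · exact Or.inr ⟨a, h2, rfl, h1⟩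
      · rintro (⟨v', hv', rfl, rfl⟩ | ⟨x', hx', rfl, rfl⟩)
        · left; exact ⟨rfl, hx, hv'⟩
        · right; exact ⟨rfl, hx'⟩
    have hdisj : Disjoint ((H.neighborFinset v).image fun v' => (x, v'))
        ((K.neighborFinset x).image fun x' => (x', v)) := by
      simp only [Finset.disjoint_left, Finset.mem_image, mem_neighborFinset]
      rintro ⟨a, b⟩ ⟨v', hv', h⟩ ⟨x', hx', h'⟩
      obtain ⟨rfl, rfl⟩ := Prod.mk.injEq .. ▸ h
      obtain ⟨rfl, -⟩ := Prod.mk.injEq .. ▸ h'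
      exact K.loopless.irrefl _ hx'
    rw [degree, hnb, Finset.card_union_of_disjoint hdisj,
      Finset.card_image_of_injective _ (fun a b h => (Prod.mk.injEq .. ▸ h).2),
      Finset.card_image_of_injective _ (fun a b h => (Prod.mk.injEq .. ▸ h).1)]
    rw [if_pos hx]; rfl
  · have hnb : (hierProd K H U).neighborFinset (x, v) =
        ((K.neighborFinset x).image fun x' => (x', v)) := by
      ext ⟨a, b⟩
      rw [mem_neighborFinset]
      simp only [mem_neighborFinset, hierProd, Finset.mem_image, Prod.mk.injEq]
      constructor
      · rintro (⟨h1, h2, h3⟩ | ⟨h1, h2⟩)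
        · exact absurd (h1 ▸ h2) hx
        · exact ⟨a, h2, rfl, h1⟩
      · rintro ⟨x', hx', rfl, rfl⟩
        right; exact ⟨rfl, hx'⟩
    rw [degree, hnb,
      Finset.card_image_of_injective _ (fun a b h => (Prod.mk.injEq .. ▸ h).1)]
    rw [if_neg hx, zero_add]; rfl
lemma Sgraph_degree_inl {α : Type*} [Fintype α] (G : SimpleGraph α) (u : α) :
    (Sgraph G).degree (Sum.inl u) = G.degree u := by
  classical
  have hnb : (Sgraph G).neighborFinset (Sum.inl u) =
      (univ.filter fun e : G.edgeSet => u ∈ (e : Sym2 α)).image Sum.inr := by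
    ext x
    cases x with
    | inl v => rw [mem_neighborFinset]; simp [Sgraph]
    | inr e => rw [mem_neighborFinset]; simp [Sgraph]
  rw [degree, hnb, Finset.card_image_of_injective _ Sum.inr_injective]
  rw [← Fintype.card_subtype]
  rw [← G.card_incidenceSet_eq_degree u]
  apply Fintype.card_congr
  exact (Equiv.subtypeSubtypeEquivSubtypeInter (· ∈ G.edgeSet) (u ∈ ·)).trans
    (Equiv.setCongr rfl)

lemma Sgraph_degree_inr {α : Type*} [Fintype α] (G : SimpleGraph α) (e : G.edgeSet) :
    (Sgraph G).degree (Sum.inr e) = 2 := by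
  classical
  obtain ⟨e, he⟩ := e
  induction e with
  | _ a b =>
    have hab : a ≠ b := (G.ne_of_adj (by simpa using he))
    have hnb : (Sgraph G).neighborFinset (Sum.inr ⟨s(a, b), he⟩) =
        {Sum.inl a, Sum.inl b} := by
      ext x
      cases x with
      | inl v => rw [mem_neighborFinset]; simp [Sgraph, Sym2.mem_iff]
      | inr f => rw [mem_neighborFinset]; simp [Sgraph]
    rw [degree, hnb, Finset.card_pair (by simp [hab])]
lemma pathGraph_degree {n : ℕ} (hn : 2 ≤ n) (i : Fin n) :
    (pathGraph n).degree i = if (i : ℕ) = 0 ∨ (i : ℕ) = n - 1 then 1 else 2 := by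
  classical
  by_cases h0 : (i : ℕ) = 0
  · have hnb : (pathGraph n).neighborFinset i = {⟨1, by omega⟩} := by
      ext j
      have hj := j.isLt
      simp only [mem_neighborFinset, pathGraph_adj, Finset.mem_singleton, Fin.ext_iff]
      omega
    rw [degree, hnb, if_pos (Or.inl h0)]
    simp
  · by_cases h1 : (i : ℕ) = n - 1
    · have hnb : (pathGraph n).neighborFinset i = {⟨n - 2, by omega⟩} := by
        ext j
        have hj := j.isLt
        simp only [mem_neighborFinset, pathGraph_adj, Finset.mem_singleton, Fin.ext_iff]
        omega
      rw [degree, hnb, if_pos (Or.inr h1)]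
      simp
    · have hi := i.isLt
      have hnb : (pathGraph n).neighborFinset i =
          {⟨(i : ℕ) - 1, by omega⟩, ⟨(i : ℕ) + 1, by omega⟩} := by
        ext j
        have hj := j.isLt
        simp only [mem_neighborFinset, pathGraph_adj, Finset.mem_insert,
          Finset.mem_singleton, Fin.ext_iff]
        omega
      rw [degree, hnb, if_neg (by tauto), Finset.card_pair (by simp only [ne_eq, Fin.mk.injEq]; omega)]
lemma pathGraph_sum_pow {n : ℕ} (hn : 2 ≤ n) (k : ℕ) :
    ∑ i : Fin n, ((pathGraph n).degree i : ℤ) ^ k = 2 + ((n : ℤ) - 2) * 2 ^ k := by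
  classical
  have h1 : ∀ i ∈ (univ : Finset (Fin n)), ((pathGraph n).degree i : ℤ) ^ k =
      if (i : ℕ) = 0 ∨ (i : ℕ) = n - 1 then 1 else 2 ^ k := by
    intro i _
    rw [pathGraph_degree hn i]
    split <;> norm_num
  rw [Finset.sum_congr rfl h1, Finset.sum_ite]
  have hc1 : (univ.filter fun i : Fin n => (i : ℕ) = 0 ∨ (i : ℕ) = n - 1).card = 2 := by
    have he : (univ.filter fun i : Fin n => (i : ℕ) = 0 ∨ (i : ℕ) = n - 1) =
        {⟨0, by omega⟩, ⟨n - 1, by omega⟩} := by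
      ext j
      have hj := j.isLt
      simp only [Finset.mem_filter, Finset.mem_univ, true_and, Finset.mem_insert,
        Finset.mem_singleton, Fin.ext_iff]
      try omega
    rw [he, Finset.card_pair (by simp only [ne_eq, Fin.mk.injEq]; omega)]
  have hc2 : (univ.filter fun i : Fin n => ¬((i : ℕ) = 0 ∨ (i : ℕ) = n - 1)).card = n - 2 := by
    have h := Finset.card_filter_add_card_filter_not (s := (univ : Finset (Fin n)))
      (p := fun i : Fin n => (i : ℕ) = 0 ∨ (i : ℕ) = n - 1)
    rw [hc1] at h
    simp only [Finset.card_univ, Fintype.card_fin] at h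
    omega
  rw [Finset.sum_const, Finset.sum_const, hc1, hc2, nsmul_eq_mul, nsmul_eq_mul,
    Nat.cast_sub hn]
  push_cast
  ring_nf
lemma path_card_edges {n : ℕ} (hn : 2 ≤ n) :
    (Fintype.card (pathGraph n).edgeSet : ℤ) = n - 1 := by
  classical
  have h := SimpleGraph.sum_degrees_eq_twice_card_edges (pathGraph n)
  have h2 : ((∑ v, (pathGraph n).degree v : ℕ) : ℤ) = 2 + ((n : ℤ) - 2) * 2 := by
    push_cast
    simpa using pathGraph_sum_pow hn 1
  have h3 : Fintype.card (pathGraph n).edgeSet = (pathGraph n).edgeFinset.card :=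
    (Set.toFinset_card _).symm
  rw [h] at h2
  rw [h3]
  push_cast at h2 ⊢
  linarith

theorem Findex_Ssum_path_path (n m : ℕ) (hn : 2 ≤ n) (hm : 2 ≤ m) :
    (Findex (FSum (Sgraph (pathGraph n)) (pathGraph m)) : ℤ) =
      72 * n * m - 74 * n - 82 * m + 72 := by
  classical
  have hdeg1 : ∀ (u : Fin n) (v : Fin m),
      (FSum (Sgraph (pathGraph n)) (pathGraph m)).degree (Sum.inl u, v)
        = (pathGraph m).degree v + (pathGraph n).degree u := by
    intro u v
    rw [FSum, hierProd_degree, Sgraph_degree_inl, if_pos ⟨u, rfl⟩]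
  have hdeg2 : ∀ (e : (pathGraph n).edgeSet) (v : Fin m),
      (FSum (Sgraph (pathGraph n)) (pathGraph m)).degree (Sum.inr e, v) = 2 := by
    intro e v
    rw [FSum, hierProd_degree, Sgraph_degree_inr, if_neg (by simp), zero_add]
  rw [Findex]
  push_cast
  rw [Fintype.sum_prod_type, Fintype.sum_sum_type]
  have h1 : ∀ u : Fin n, ∑ v : Fin m,
      ((FSum (Sgraph (pathGraph n)) (pathGraph m)).degree (Sum.inl u, v) : ℤ) ^ 3
      = (2 + ((m : ℤ) - 2) * 2 ^ 3)
        + 3 * ((pathGraph n).degree u : ℤ) * (2 + ((m : ℤ) - 2) * 2 ^ 2)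
        + 3 * ((pathGraph n).degree u : ℤ) ^ 2 * (2 + ((m : ℤ) - 2) * 2 ^ 1)
        + (m : ℤ) * ((pathGraph n).degree u : ℤ) ^ 3 := by
    intro u
    have : ∀ v : Fin m,
        ((FSum (Sgraph (pathGraph n)) (pathGraph m)).degree (Sum.inl u, v) : ℤ) ^ 3
        = ((pathGraph m).degree v : ℤ) ^ 3
          + 3 * ((pathGraph n).degree u : ℤ) * ((pathGraph m).degree v : ℤ) ^ 2
          + 3 * ((pathGraph n).degree u : ℤ) ^ 2 * ((pathGraph m).degree v : ℤ) ^ 1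
          + ((pathGraph n).degree u : ℤ) ^ 3 := by
      intro v
      rw [hdeg1 u v]
      push_cast
      ring
    rw [Finset.sum_congr rfl fun v _ => this v, Finset.sum_add_distrib,
      Finset.sum_add_distrib, Finset.sum_add_distrib, ← Finset.mul_sum, ← Finset.mul_sum,
      Finset.sum_const, Finset.card_univ, Fintype.card_fin, nsmul_eq_mul,
      pathGraph_sum_pow hm 3, pathGraph_sum_pow hm 2, pathGraph_sum_pow hm 1]
  have h2 : ∀ e : (pathGraph n).edgeSet, ∑ v : Fin m,
      ((FSum (Sgraph (pathGraph n)) (pathGraph m)).degree (Sum.inr e, v) : ℤ) ^ 3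
      = (m : ℤ) * 8 := by
    intro e
    have : ∀ v : Fin m,
        ((FSum (Sgraph (pathGraph n)) (pathGraph m)).degree (Sum.inr e, v) : ℤ) ^ 3
          = 8 := by
      intro v
      rw [hdeg2 e v]
      norm_num
    rw [Finset.sum_congr rfl fun v _ => this v, Finset.sum_const, Finset.card_univ,
      Fintype.card_fin, nsmul_eq_mul]
  rw [Finset.sum_congr rfl fun u _ => h1 u, Finset.sum_congr rfl fun e _ => h2 e,
    Finset.sum_const, Finset.card_univ, nsmul_eq_mul, path_card_edges hn,
    Finset.sum_add_distrib, Finset.sum_add_distrib, Finset.sum_add_distrib,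
    Finset.sum_const, Finset.card_univ, Fintype.card_fin, nsmul_eq_mul]
  have e3 := pathGraph_sum_pow hn 3
  have e2 := pathGraph_sum_pow hn 2
  have e1 := pathGraph_sum_pow hn 1
  rw [show (∑ u : Fin n, 3 * ((pathGraph n).degree u : ℤ) * (2 + ((m : ℤ) - 2) * 2 ^ 2))
      = 3 * (2 + ((m : ℤ) - 2) * 2 ^ 2) * ∑ u : Fin n, ((pathGraph n).degree u : ℤ) ^ 1 by
        rw [Finset.mul_sum]; apply Finset.sum_congr rfl; intros; ring,
    show (∑ u : Fin n, 3 * ((pathGraph n).degree u : ℤ) ^ 2 * (2 + ((m : ℤ) - 2) * 2 ^ 1))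
      = 3 * (2 + ((m : ℤ) - 2) * 2 ^ 1) * ∑ u : Fin n, ((pathGraph n).degree u : ℤ) ^ 2 by
        rw [Finset.mul_sum]; apply Finset.sum_congr rfl; intros; ring,
    show (∑ u : Fin n, (m : ℤ) * ((pathGraph n).degree u : ℤ) ^ 3)
      = (m : ℤ) * ∑ u : Fin n, ((pathGraph n).degree u : ℤ) ^ 3 by
        rw [Finset.mul_sum],
    e1, e2, e3]
  ring
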